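/- For λ > 0 and δ ≥ 1, one has -e^{-λ} + Σ_{n=1}^∞ (λ/δ) e^{-λn/δ} = (-e^{-λ} + e^{-λ-λ/δ} + (λ/δ)e^{-λ/δ}) / (1 - e^{-λ/δ}), and this quantity is nonnegative. -/
import Mathlib


theorem series_identity_L (lam delta : ℝ) (hlam : 0 < lam) (hdelta : 1 ≤ delta) :
    ∃ S : ℝ,
      HasSum (fun n : ℕ => (lam / delta) * Real.exp (-(lam * ((n : ℝ) + 1)) / delta)) S ∧
      -Real.exp (-lam) + S =
        (-Real.exp (-lam) + Real.exp (-lam - lam / delta) +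
          (lam / delta) * Real.exp (-lam / delta)) / (1 - Real.exp (-lam / delta)) ∧
      0 ≤ -Real.exp (-lam) + S := by
  have hd0 : (0:ℝ) < delta := lt_of_lt_of_le one_pos hdelta
  set x : ℝ := lam / delta with hx
  have hx0 : 0 < x := div_pos hlam hd0
  set r : ℝ := Real.exp (-x) with hrdef
  have hr0 : 0 < r := Real.exp_pos _
  have hr1 : r < 1 := by
    rw [hrdef, Real.exp_lt_one_iff]; linarith
  have hden : 0 < 1 - r := by linarith
  have hgeo : HasSum (fun n : ℕ => (x * r) * r ^ n) ((x * r) * (1 - r)⁻¹) :=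
    (hasSum_geometric_of_lt_one hr0.le hr1).mul_left _
  have hfun : (fun n : ℕ => (lam / delta) * Real.exp (-(lam * ((n : ℝ) + 1)) / delta))
      = fun n : ℕ => (x * r) * r ^ n := by
    funext n
    have h1 : -(lam * ((n : ℝ) + 1)) / delta = ((n : ℝ) + 1) * (-x) := by
      rw [hx]; ring
    rw [h1, show ((n:ℝ) + 1) = ((n + 1 : ℕ) : ℝ) by push_cast; ring,
      Real.exp_nat_mul, ← hrdef, ← hx, pow_succ]
    ring
  refine ⟨(x * r) * (1 - r)⁻¹, by rw [hfun]; exact hgeo, ?_, ?_⟩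
  · have hexp : Real.exp (-lam - x) = Real.exp (-lam) * r := by
      rw [hrdef, ← Real.exp_add]; ring_nf
    rw [hexp, neg_div, ← hx, ← hrdef]
    field_simp
    ring
  · have hS : -Real.exp (-lam) + (x * r) * (1 - r)⁻¹
        = (x * r - Real.exp (-lam) * (1 - r)) / (1 - r) := by
      field_simp; ring
    rw [hS]
    apply div_nonneg _ hden.le
    have h1 : 1 - x ≤ r := by
      have := Real.add_one_le_exp (-x); linarith
    have h2 : Real.exp (-lam) ≤ r := by
      rw [hrdef]
      apply Real.exp_le_exp.2
      have : x ≤ lam := by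
        rw [hx]; exact div_le_self hlam.le hdelta
      linarith
    nlinarith [Real.exp_pos (-lam)]
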